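/- The CLEAR-MOT association heuristic can be arbitrarily far from optimal: for every threshold thr > 0 and every m ≥ 2 there exists a constant C > 0 such that for all sufficiently large T there exist hole-free configurations A, B of m trajectories of length T taking values in ℝ² and a sequence Σ ∈ Π^T such that swi(Σ) = 0 and dist(Σ, A, B) ≤ C/T, while every CLEAR-MOT association Σ_MOT for (A, B) with threshold thr satisfies dist(Σ_MOT, A, B) ≥ m·thr − C/T. -/

import Mathlib

noncomputable def pt (x : ℝ) : EuclideanSpace ℝ (Fin 2) := WithLp.toLp 2 ![x, 0]

lemma dist_pt (x y : ℝ) : dist (pt x) (pt y) = |x - y| := by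
  rw [EuclideanSpace.dist_eq]
  simp [pt, Fin.sum_univ_two, Real.dist_eq, Real.sqrt_sq_eq_abs]

lemma fin_val_eq_zero_iff {m : ℕ} [NeZero m] (i : Fin m) : i.val = 0 ↔ i = 0 := by
  exact Fin.val_eq_zero_iff

lemma perm_eq_one_of {m : ℕ} [NeZero m] (σ : Equiv.Perm (Fin m))
    (h : ∀ i : Fin m, i ≠ 0 → σ i = i) : σ = 1 := by
  have h0 : σ 0 = 0 := by
    by_contra hj
    exact hj (σ.injective (h (σ 0) hj))
  ext i
  by_cases hi : i = 0
  · simp [hi, h0]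
  · simp [h i hi]

lemma one_le_abs_cast {a b : ℕ} (h : a ≠ b) : 1 ≤ |(a:ℝ) - b| := by
  rcases h.lt_or_gt with h' | h'
  · have : (a:ℝ) + 1 ≤ b := by exact_mod_cast h'
    rw [abs_sub_comm, abs_of_nonneg] <;> linarith
  · have : (b:ℝ) + 1 ≤ a := by exact_mod_cast h'
    rw [abs_of_nonneg] <;> linarith



/-- `Σ` is a CLEAR-MOT association for `(A, B)` with threshold `thr`: `σ(1)` is a
minimum-cost matching, and at each later instant the matches within distance `thr` are
anchored while the remaining components are chosen to minimize the cost among all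
permutations respecting the anchored matches. -/
def IsClearMot {m T : ℕ} (thr : ℝ)
    (A B : Fin m → Fin T → EuclideanSpace ℝ (Fin 2))
    (S : Fin T → Equiv.Perm (Fin m)) : Prop :=
  (∀ (h0 : 0 < T) (σ : Equiv.Perm (Fin m)),
    ∑ i, dist (A i ⟨0, h0⟩) (B (S ⟨0, h0⟩ i) ⟨0, h0⟩)
      ≤ ∑ i, dist (A i ⟨0, h0⟩) (B (σ i) ⟨0, h0⟩)) ∧
  ∀ t : Fin (T - 1),
    let prev : Fin T := ⟨t.1, by have := t.2; omega⟩
    let cur : Fin T := ⟨t.1 + 1, by have := t.2; omega⟩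
    (∀ i, dist (A i cur) (B (S prev i) cur) < thr → S cur i = S prev i) ∧
    ∀ σ : Equiv.Perm (Fin m),
      (∀ i, dist (A i cur) (B (S prev i) cur) < thr → σ i = S prev i) →
      ∑ i, dist (A i cur) (B (S cur i) cur) ≤ ∑ i, dist (A i cur) (B (σ i) cur)

/-- The (normalized) switch count
`swi(Σ) = (1/(T−1)) ∑_{t=1}^{T−1} 𝟙{σ(t) ≠ σ(t+1)}`. -/
noncomputable def swi {m T : ℕ} (S : Fin T → Equiv.Perm (Fin m)) : ℝ :=
  (1 / ((T : ℝ) - 1)) * ∑ t : Fin (T - 1),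
    (if S ⟨t.1, by have := t.2; omega⟩ ≠ S ⟨t.1 + 1, by have := t.2; omega⟩
     then (1 : ℝ) else 0)

/-- The (normalized) distance term
`dist(Σ, A, B) = (1/T) ∑_{t=1}^{T} ∑_{i=1}^{m} ‖A_i(t) − B_{σ(t)(i)}(t)‖`. -/
noncomputable def distTerm {m T : ℕ} (S : Fin T → Equiv.Perm (Fin m))
    (A B : Fin m → Fin T → EuclideanSpace ℝ (Fin 2)) : ℝ :=
  (1 / (T : ℝ)) * ∑ t, ∑ i, dist (A i t) (B (S t i) t)

/-- The CLEAR-MOT association heuristic can be arbitrarily far from optimal: for every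
`thr > 0` and `m ≥ 2` there is a constant `C > 0` such that for all sufficiently large
`T` there are hole-free configurations `A, B` in `ℝ²` and an association `Σ` with
`swi(Σ) = 0` and `dist(Σ, A, B) ≤ C/T`, while every CLEAR-MOT association `Σ_MOT`
satisfies `dist(Σ_MOT, A, B) ≥ m·thr − C/T`. -/
theorem clearMot_association_bad (thr : ℝ) (hthr : 0 < thr) (m : ℕ) (hm : 2 ≤ m) :
    ∃ C : ℝ, 0 < C ∧ ∃ T₀ : ℕ, ∀ T : ℕ, T₀ ≤ T →
      ∃ (A B : Fin m → Fin T → EuclideanSpace ℝ (Fin 2))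
        (S : Fin T → Equiv.Perm (Fin m)),
        swi S = 0 ∧ distTerm S A B ≤ C / T ∧
        ∀ SMOT : Fin T → Equiv.Perm (Fin m), IsClearMot thr A B SMOT →
          (m : ℝ) * thr - C / T ≤ distTerm SMOT A B := by
  haveI : NeZero m := ⟨by omega⟩
  refine ⟨(m:ℝ)^2 * (thr + 2), by positivity, 2, fun T hT => ?_⟩
  haveI : NeZero T := ⟨by omega⟩
  have hT2 : (2:ℝ) ≤ T := by exact_mod_cast hT
  have hTpos : (0:ℝ) < T := by linarith
  have hm2 : (2:ℝ) ≤ m := by exact_mod_cast hm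
  set d : ℝ := thr * ((T:ℝ) - 1) / T with hd
  have hd0 : 0 ≤ d := by
    apply div_nonneg _ hTpos.le
    nlinarith
  have hdlt : d < thr := by
    rw [hd, div_lt_iff₀ hTpos]; nlinarith
  set b : Fin m → ℕ := fun i => if i.val = 0 then m - 1 else i.val - 1 with hb
  set A : Fin m → Fin T → EuclideanSpace ℝ (Fin 2) :=
    fun i t => if t.val = 0 then pt i.val else pt (i.val * d) with hA
  set B : Fin m → Fin T → EuclideanSpace ℝ (Fin 2) :=
    fun i t => if t.val = 0 then pt i.val else pt (b i * d) with hB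
  set c : Equiv.Perm (Fin m) := Equiv.addRight 1 with hc
  have hcval : ∀ i : Fin m, (c i).val = (i.val + 1) % m := by
    intro i; simp [hc, Fin.val_add, Fin.add_def, Fin.val_one']
  have hbc : ∀ i : Fin m, b (c i) = i.val := by
    intro i
    have h2 := i.isLt
    have hcv := hcval i
    show (if (c i).val = 0 then m - 1 else (c i).val - 1) = i.val
    by_cases h5 : i.val + 1 = m
    · have h6 : (c i).val = 0 := by rw [hcv, h5, Nat.mod_self]
      rw [h6, if_pos rfl]
      omega
    · have h6 : (c i).val = i.val + 1 := by rw [hcv]; exact Nat.mod_eq_of_lt (by omega)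
      rw [h6, if_neg (by omega)]
      omega
  have hbne : ∀ i : Fin m, b i ≠ i.val := by
    intro i
    show (if i.val = 0 then m - 1 else i.val - 1) ≠ i.val
    have := i.isLt
    split_ifs with h <;> omega
  refine ⟨A, B, fun _ => c, ?_, ?_, ?_⟩
  · -- swi = 0
    simp [swi]
  · -- distTerm of the good association
    have key2 : ∀ t : Fin T, (∑ i, dist (A i t) (B (c i) t)) ≤ if t.val = 0 then (m:ℝ)*m else 0 := by
      intro t
      by_cases ht : t.val = 0
      · rw [if_pos ht]
        calc ∑ i, dist (A i t) (B (c i) t) ≤ ∑ _i : Fin m, (m:ℝ) := by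
              apply Finset.sum_le_sum
              intro i _
              simp only [hA, hB, if_pos ht, dist_pt]
              have e1 : (i.val:ℝ) < m := by exact_mod_cast i.isLt
              have e2 : ((c i).val:ℝ) < m := by exact_mod_cast (c i).isLt
              have e3 : (0:ℝ) ≤ (i.val:ℝ) := by positivity
              have e4 : (0:ℝ) ≤ ((c i).val:ℝ) := by positivity
              rw [abs_le]
              constructor <;> linarith
          _ = (m:ℝ)*m := by simp [Finset.sum_const, Finset.card_univ, mul_comm]
      · rw [if_neg ht]
        have hz : ∀ i ∈ (Finset.univ : Finset (Fin m)), dist (A i t) (B (c i) t) = 0 := by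
          intro i _
          have hcast : ((b (c i) : ℕ) : ℝ) = (i.val : ℝ) := by exact_mod_cast hbc i
          have ht' : t ≠ 0 := fun h => ht ((fin_val_eq_zero_iff t).mpr h)
          simp [hA, hB, if_neg ht, dist_pt, hcast, ht']
        rw [Finset.sum_eq_zero hz]
    have sum2 : ∑ t : Fin T, ∑ i, dist (A i t) (B (c i) t) ≤ (m:ℝ)*m := by
      calc ∑ t : Fin T, ∑ i, dist (A i t) (B (c i) t)
          ≤ ∑ t : Fin T, (if t.val = 0 then (m:ℝ)*m else 0) :=
            Finset.sum_le_sum (fun t _ => key2 t)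
        _ = (m:ℝ)*m := by
            simp [fin_val_eq_zero_iff]
    rw [distTerm]
    calc (1/(T:ℝ)) * ∑ t, ∑ i, dist (A i t) (B (c i) t) ≤ (1/(T:ℝ)) * ((m:ℝ)*m) := by
          apply mul_le_mul_of_nonneg_left sum2 (by positivity)
      _ ≤ ((m:ℝ)^2 * (thr+2)) / T := by
          rw [one_div, inv_mul_eq_div, div_le_div_iff₀ hTpos hTpos]
          nlinarith [mul_nonneg (mul_nonneg (sq_nonneg (m:ℝ)) hthr.le) hTpos.le,
            mul_nonneg (sq_nonneg (m:ℝ)) hTpos.le]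
  · -- lower bound for every CLEAR-MOT association
    intro SMOT hclear
    have hid : ∀ k (hk : k < T), SMOT ⟨k, hk⟩ = 1 := by
      intro k
      induction k with
      | zero =>
        intro hk
        have hmin := hclear.1 hk 1
        have hR : ∑ i, dist (A i ⟨0,hk⟩) (B ((1:Equiv.Perm (Fin m)) i) ⟨0,hk⟩) = 0 := by
          apply Finset.sum_eq_zero
          intro i _
          simp [hA, hB, dist_pt]
        rw [hR] at hmin
        have hzero := (Finset.sum_eq_zero_iff_of_nonneg (fun i _ => dist_nonneg)).mp
          (le_antisymm hmin (Finset.sum_nonneg fun i _ => dist_nonneg))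
        ext i
        have h1 := hzero i (Finset.mem_univ i)
        have hv : ((⟨0,hk⟩ : Fin T)).val = 0 := rfl
        simp only [hA, hB, hv, if_pos, dist_pt] at h1
        have h2 : (i.val:ℝ) = ((SMOT ⟨0,hk⟩ i).val:ℝ) := by
          have := abs_eq_zero.mp h1
          linarith
        have h3 : i.val = (SMOT ⟨0,hk⟩ i).val := by exact_mod_cast h2
        simp [Equiv.Perm.one_apply, (Fin.ext h3).symm]
        exact h3.symm
      | succ k ih =>
        intro hk
        have hkT : k < T := by omega
        have hprev : SMOT ⟨k, hkT⟩ = 1 := ih hkT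
        have hstep := (hclear.2 ⟨k, by omega⟩).1
        apply perm_eq_one_of
        intro i hi
        have hi' : i.val ≠ 0 := fun h => hi ((fin_val_eq_zero_iff i).mp h)
        have hiv : 1 ≤ i.val := Nat.one_le_iff_ne_zero.mpr hi'
        have hbi : ((b i : ℕ) : ℝ) = (i.val : ℝ) - 1 := by
          show (((if i.val = 0 then m - 1 else i.val - 1 : ℕ)) : ℝ) = _
          rw [if_neg hi', Nat.cast_sub hiv, Nat.cast_one]
        have hv : ((⟨k+1, hk⟩ : Fin T)).val ≠ 0 := by simp
        have hdist : dist (A i ⟨k+1, hk⟩) (B ((SMOT ⟨k, hkT⟩) i) ⟨k+1, hk⟩) < thr := by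
          rw [hprev]
          simp only [Equiv.Perm.one_apply, hA, hB, if_neg hv, dist_pt, hbi]
          have he : (i.val:ℝ)*d - ((i.val:ℝ)-1)*d = d := by ring
          rw [he, abs_of_nonneg hd0]
          exact hdlt
        have hres := hstep i hdist
        rw [hprev] at hres
        simpa using hres
    have sum4 : ∀ t : Fin T, t.val ≠ 0 → (m:ℝ)*d ≤ ∑ i, dist (A i t) (B (SMOT t i) t) := by
      intro t ht
      have hidt : SMOT t = 1 := by
        have := hid t.val t.isLt
        simpa using this
      rw [hidt]
      calc (m:ℝ)*d = ∑ _i : Fin m, d := by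
            simp [Finset.sum_const, Finset.card_univ, mul_comm]
        _ ≤ ∑ i, dist (A i t) (B ((1:Equiv.Perm (Fin m)) i) t) := by
            apply Finset.sum_le_sum
            intro i _
            simp only [Equiv.Perm.one_apply, hA, hB, if_neg ht, dist_pt]
            have e1 : (i.val:ℝ)*d - (b i:ℝ)*d = ((i.val:ℝ) - (b i:ℝ))*d := by ring
            rw [e1, abs_mul, abs_of_nonneg hd0]
            have e2 : 1 ≤ |(i.val:ℝ) - (b i:ℝ)| := one_le_abs_cast (Ne.symm (hbne i))
            nlinarith
    have sumlow : ((T:ℝ)-1) * ((m:ℝ)*d) ≤ ∑ t : Fin T, ∑ i, dist (A i t) (B (SMOT t i) t) := by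
      have h1 : ∑ t : Fin T, (if t.val = 0 then (0:ℝ) else (m:ℝ)*d)
          ≤ ∑ t : Fin T, ∑ i, dist (A i t) (B (SMOT t i) t) := by
        apply Finset.sum_le_sum
        intro t _
        split_ifs with h
        · exact Finset.sum_nonneg fun i _ => dist_nonneg
        · exact sum4 t h
      refine le_trans (le_of_eq ?_) h1
      have e1 : ∀ t : Fin T, (if t.val = 0 then (0:ℝ) else (m:ℝ)*d)
          = (m:ℝ)*d - (if t = 0 then (m:ℝ)*d else 0) := by
        intro t
        by_cases h : t = 0 <;> simp [h, fin_val_eq_zero_iff]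
      rw [Finset.sum_congr rfl (fun t _ => e1 t), Finset.sum_sub_distrib]
      simp [Finset.sum_const, Finset.card_univ]
      ring
    rw [distTerm]
    calc (m:ℝ)*thr - ((m:ℝ)^2 * (thr + 2))/T
        ≤ (1/(T:ℝ)) * (((T:ℝ)-1) * ((m:ℝ)*d)) := by
          have e : (1/(T:ℝ)) * (((T:ℝ)-1) * ((m:ℝ)*(thr * ((T:ℝ)-1)/T)))
              = (m:ℝ)*thr*((T:ℝ)-1)^2/(T:ℝ)^2 := by
            field_simp
          rw [hd, e]
          have h1 : (m:ℝ)*thr*(T:ℝ)^2 - ((m:ℝ)^2*(thr+2))*(T:ℝ) ≤ (m:ℝ)*thr*((T:ℝ)-1)^2 := by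
            nlinarith [mul_nonneg (mul_nonneg (by nlinarith : (0:ℝ) ≤ (m:ℝ)*((m:ℝ)-2)) hthr.le) hTpos.le,
              mul_nonneg (mul_nonneg (by linarith : (0:ℝ) ≤ (m:ℝ)) hthr.le) hTpos.le,
              mul_nonneg (sq_nonneg (m:ℝ)) hTpos.le,
              mul_nonneg (by positivity : (0:ℝ) ≤ (m:ℝ)*thr) hTpos.le]
          calc (m:ℝ)*thr - ((m:ℝ)^2 * (thr + 2))/T
              = ((m:ℝ)*thr*(T:ℝ)^2 - ((m:ℝ)^2*(thr+2))*(T:ℝ))/(T:ℝ)^2 := by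
                field_simp
            _ ≤ (m:ℝ)*thr*((T:ℝ)-1)^2/(T:ℝ)^2 := by
                apply div_le_div_of_nonneg_right h1 ?_
                positivity
      _ ≤ (1/(T:ℝ)) * ∑ t, ∑ i, dist (A i t) (B (SMOT t i) t) := by
          apply mul_le_mul_of_nonneg_left sumlow (by positivity)
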